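/- Let A′ = x·𝟙_{g+1} + L(I_{2,g+1}; V_{1,g}), i.e., the matrix A in which I_1 and V_{g+1} are replaced by 0 (so that the corner entry (1,g+1) of L becomes 0, the entry (g+1,g) becomes 0, and the entry (g+1,g+1) becomes 0, while the corner entry (g+1,1) stays (−1)^g y). Let T be the g×g tridiagonal matrix with diagonal entries T_{ii} = I_{i+1} + V_i + x for i = 1,…,g, superdiagonal entries T_{i,i+1} = 1, and subdiagonal entries T_{i+1,i} = I_{i+1}V_{i+1} for i = 1,…,g−1. Then x·det T = det A′ − y; equivalently, for x ≠ 0, det T = (det(x·𝟙 + L(I_{2,g+1}; V_{1,g})) − y)/x. -/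

import Mathlib

/-- The Lax matrix `L(I;V)` of the periodic discrete Toda lattice (0-indexed:
row/column `i : Fin (g+1)` corresponds to the 1-indexed `i+1`).  Its entries are
`L_{ii} = I_{i+1} + V_i` (cyclically, so the last diagonal entry is
`I_1 + V_{g+1}`), `L_{i,i+1} = 1`, `L_{i+1,i} = I_{i+1} V_{i+1}`,
`L_{1,g+1} = (-1)^g I_1 V_1 / y`, `L_{g+1,1} = (-1)^g y`,
all other entries `0`. -/
noncomputable def todaLax (g : ℕ) (I V : Fin (g + 1) → ℂ) (y : ℂ) :
    Matrix (Fin (g + 1)) (Fin (g + 1)) ℂ :=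
  Matrix.of fun i j =>
    (if j = i then I (i + 1) + V i else 0)
    + (if (i : ℕ) + 1 = (j : ℕ) then 1 else 0)
    + (if (j : ℕ) + 1 = (i : ℕ) then I i * V i else 0)
    + (if (i : ℕ) = 0 ∧ (j : ℕ) = g then (-1) ^ g * I 0 * V 0 / y else 0)
    + (if (i : ℕ) = g ∧ (j : ℕ) = 0 then (-1) ^ g * y else 0)

/-- The `g × g` tridiagonal matrix `T` with diagonal entries
`T_{ii} = I_{i+1} + V_i + x` (1-indexed `i = 1, …, g`), superdiagonal entries
`1`, and subdiagonal entries `T_{i+1,i} = I_{i+1} V_{i+1}` (1-indexed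
`i = 1, …, g-1`). -/
noncomputable def todaT (g : ℕ) (I V : Fin (g + 1) → ℂ) (x : ℂ) :
    Matrix (Fin g) (Fin g) ℂ :=
  Matrix.of fun r c =>
    if r = c then I r.succ + V r.castSucc + x
    else if (r : ℕ) + 1 = (c : ℕ) then 1
    else if (c : ℕ) + 1 = (r : ℕ) then I r.castSucc * V r.castSucc
    else 0

theorem key (n : ℕ) (I V : Fin (n + 2) → ℂ) (x y : ℂ) :
    (x • (1 : Matrix (Fin (n + 2)) (Fin (n + 2)) ℂ) +
      todaLax (n+1) (Function.update I 0 0) (Function.update V (Fin.last (n+1)) 0) y).det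
    = x * (todaT (n+1) I V x).det + y := by
  set I' := Function.update I 0 0 with hI'
  set V' := Function.update V (Fin.last (n+1)) 0 with hV'
  set A := x • (1 : Matrix (Fin (n + 2)) (Fin (n + 2)) ℂ) + todaLax (n+1) I' V' y with hA
  have hI0 : I' 0 = 0 := Function.update_self _ _ _
  have hVlast : V' (Fin.last (n+1)) = 0 := Function.update_self _ _ _
  -- entries of A
  have hAe : ∀ i j : Fin (n+2), A i j =
      (if i = j then x else 0)
      + (if j = i then I' (i + 1) + V' i else 0)
      + (if (i : ℕ) + 1 = (j : ℕ) then 1 else 0)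
      + (if (j : ℕ) + 1 = (i : ℕ) then I' i * V' i else 0)
      + (if (i : ℕ) = 0 ∧ (j : ℕ) = n+1 then (-1) ^ (n+1) * I' 0 * V' 0 / y else 0)
      + (if (i : ℕ) = n+1 ∧ (j : ℕ) = 0 then (-1) ^ (n+1) * y else 0) := by
    intro i j
    simp [hA, todaLax, Matrix.add_apply, Matrix.smul_apply, Matrix.one_apply, mul_ite,
      mul_one, mul_zero]
    ring
  have hrow : ∀ j : Fin (n+2), j ≠ 0 → j ≠ Fin.last (n+1) → A (Fin.last (n+1)) j = 0 := by
    intro j hj0 hjl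
    have h0 : (j : ℕ) ≠ 0 := fun h => hj0 (Fin.ext h)
    have hl : (j : ℕ) ≠ n+1 := fun h => hjl (Fin.ext h)
    have hjlt : (j : ℕ) < n + 2 := j.is_lt
    have c1 : ¬ (Fin.last (n+1) = j) := fun h => hjl h.symm
    have c2 : ¬ ((Fin.last (n+1) : Fin (n+2)) : ℕ) + 1 = (j : ℕ) := by
      simp [Fin.val_last]; omega
    rw [hAe, if_neg c1, if_neg (fun h => hjl h), if_neg c2]
    simp [hVlast, Fin.val_last, h0]
  -- the (last,last) minor is todaT
  have hminT : A.submatrix Fin.castSucc Fin.castSucc = todaT (n+1) I V x := by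
    ext r c
    have hrn : (r : ℕ) ≠ n + 1 := by have := r.is_lt; omega
    have hcn : (c : ℕ) ≠ n + 1 := by have := c.is_lt; omega
    rw [Matrix.submatrix_apply, hAe]
    rcases eq_or_ne r c with rfl | hrc
    · simp [todaT, Fin.coeSucc_eq_succ, Function.update_of_ne (Fin.succ_ne_zero r),
        Function.update_of_ne (Fin.castSucc_lt_last r).ne, hrn, hI', hV']
      ring
    · have hrc' : ¬ Fin.castSucc r = Fin.castSucc c := by simpa [Fin.castSucc_inj] using hrc
      have hrc'' : ¬ Fin.castSucc c = Fin.castSucc r := fun h => hrc' h.symm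
      by_cases h2 : (r : ℕ) + 1 = (c : ℕ)
      · have h3 : ¬ ((c : ℕ) + 1 = (r : ℕ)) := by omega
        simp [todaT, hrc, hrc', hrc'', h2, h3, hrn, hcn]
      · by_cases h3 : (c : ℕ) + 1 = (r : ℕ)
        · have hr0 : Fin.castSucc r ≠ 0 := by
            simp [Fin.ext_iff, -Fin.val_eq_zero_iff]; omega
          simp [todaT, hrc, hrc', hrc'', h2, h3, hrn, hcn,
            Function.update_of_ne hr0, Function.update_of_ne (Fin.castSucc_lt_last r).ne,
            hI', hV']
        · simp [todaT, hrc, hrc', hrc'', h2, h3, hrn, hcn]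
  -- the (last,0) minor has determinant 1
  have hmin0 : (A.submatrix Fin.castSucc Fin.succ).det = 1 := by
    rw [Matrix.det_of_lowerTriangular]
    · refine Finset.prod_eq_one fun r _ => ?_
      have h1 : ¬ Fin.castSucc r = Fin.succ r := by simp [Fin.ext_iff]
      have h2 : ¬ Fin.succ r = Fin.castSucc r := fun h => h1 h.symm
      rw [Matrix.submatrix_apply, hAe]
      simp [h1, h2, hI0, Fin.ext_iff, Fin.coe_castSucc, Fin.val_succ, -Fin.val_eq_zero_iff]
      exact fun h => absurd h (by omega)
    · intro i j hij
      replace hij : (i : ℕ) < (j : ℕ) := hij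
      have h1 : ¬ Fin.castSucc i = Fin.succ j := by simp [Fin.ext_iff]; omega
      have h2 : ¬ Fin.succ j = Fin.castSucc i := fun h => h1 h.symm
      rw [Matrix.submatrix_apply, hAe]
      simp [h1, h2, hI0, Fin.ext_iff, Fin.coe_castSucc, Fin.val_succ, -Fin.val_eq_zero_iff]
      rw [if_neg (show ¬((i:ℕ) = (j:ℕ)) by omega),
        if_neg (show ¬((j:ℕ) + 1 + 1 = (i:ℕ)) by omega)]
      simp
  -- expand along the last row
  have hne : (0 : Fin (n+2)) ≠ Fin.last (n+1) := by simp [Fin.ext_iff]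
  have hA0 : A (Fin.last (n+1)) 0 = (-1)^(n+1) * y := by
    rw [hAe]; simp [Fin.ext_iff, hVlast]
  have hAlast : A (Fin.last (n+1)) (Fin.last (n+1)) = x := by
    rw [hAe]; simp [Fin.ext_iff, hVlast, Fin.last_add_one, hI0]
  rw [Matrix.det_succ_row A (Fin.last (n+1)),
    ← Finset.sum_subset (Finset.subset_univ ({0, Fin.last (n+1)} : Finset (Fin (n+2))))
      (fun j _ hj => by
        simp only [Finset.mem_insert, Finset.mem_singleton, not_or] at hj
        rw [hrow j hj.1 hj.2, mul_zero, zero_mul]),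
    Finset.sum_pair hne]
  simp only [Fin.succAbove_last, Fin.succAbove_zero, hA0, hAlast, hmin0, hminT,
    Fin.val_last, Fin.val_zero, mul_one]
  have hpow : ((-1:ℂ))^(n+1) * (-1)^(n+1) = 1 := by
    rw [← pow_add]; exact Even.neg_one_pow ⟨n+1, rfl⟩
  have hpow2 : ((-1:ℂ))^(n+1+(n+1)) = 1 := Even.neg_one_pow ⟨n+1, rfl⟩
  simp only [Nat.add_zero]
  linear_combination y * hpow + (todaT (n+1) I V x).det * x * hpow2

/-- With `A' = x·𝟙 + L(I_{2,g+1}; V_{1,g})` (i.e. `A = x·𝟙 + L` with `I_1` and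
`V_{g+1}` replaced by `0`), one has `x·det T = det A' - y`; equivalently, for
`x ≠ 0`, `det T = (det A' - y)/x`. -/
theorem todaT_det_eq (g : ℕ) (hg : 1 ≤ g) (I V : Fin (g + 1) → ℂ) (x y : ℂ)
    (hy : y ≠ 0) :
    x * (todaT g I V x).det =
        (x • (1 : Matrix (Fin (g + 1)) (Fin (g + 1)) ℂ) +
          todaLax g (Function.update I 0 0) (Function.update V (Fin.last g) 0) y).det
        - y ∧
    (x ≠ 0 →
      (todaT g I V x).det =
        ((x • (1 : Matrix (Fin (g + 1)) (Fin (g + 1)) ℂ) +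
            todaLax g (Function.update I 0 0) (Function.update V (Fin.last g) 0) y).det
          - y) / x) := by
  obtain ⟨n, rfl⟩ : ∃ n, g = n + 1 := ⟨g - 1, (Nat.succ_pred_eq_of_pos hg).symm⟩
  have h := key n I V x y
  constructor
  · rw [h]; ring
  · intro hx
    rw [h]
    field_simp
    ring
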